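/- The generating function G⁰(x) = (1/2)(1 + √((1-x²)/(1-9x²))) satisfies, as a formal power series, G⁰(x) = 1 + Σ_{κ≥1} |V⁰_κ| x^κ, where V⁰_κ is the set of finite sequences of nonzero integers whose absolute values sum to κ and whose entries sum to 0. -/

import Mathlib

open Finset PowerSeries

namespace G0aux

/-- term of the double binomial sum -/
def tt (m l j : ℕ) : ℤ := (Nat.choose m j : ℤ) * (Nat.choose l j : ℤ) * 2 ^ (m - j) * 2 ^ (l - j)

/-- the fundamental double-binomial kernel: coefficients of 1/(1-2u-2v+3uv) -/
def Cc (m l : ℕ) : ℤ := ∑ j ∈ Finset.range (m + l + 1), tt m l j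

def dd (m l i : ℕ) : ℤ := (Nat.choose m i : ℤ) * (Nat.choose l (i+1) : ℤ) * 2 ^ (m - i) * 2 ^ (l - i)

def Dd (m l : ℕ) : ℤ := ∑ i ∈ Finset.range (m + l + 1), dd m l i

lemma tt_eq_zero_left {m l j : ℕ} (h : m < j) : tt m l j = 0 := by
  simp [tt, Nat.choose_eq_zero_of_lt h]

lemma tt_eq_zero_right {m l j : ℕ} (h : l < j) : tt m l j = 0 := by
  simp [tt, Nat.choose_eq_zero_of_lt h]

lemma tt_comm (m l j : ℕ) : tt m l j = tt l m j := by unfold tt; ring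

lemma Cc_comm (m l : ℕ) : Cc m l = Cc l m := by
  unfold Cc
  rw [add_comm l m]
  exact Finset.sum_congr rfl (fun j _ => tt_comm m l j)

lemma Cc_zero_zero : Cc 0 0 = 1 := by decide

lemma Cc_one_one : Cc 1 1 = 5 := by decide

lemma Cc_zero_right (m : ℕ) : Cc m 0 = 2 ^ m := by
  unfold Cc
  rw [Finset.sum_eq_single 0]
  · simp [tt]
  · intro j _ hj
    exact tt_eq_zero_right (Nat.pos_of_ne_zero hj)
  · intro h; exact absurd (Finset.mem_range.2 (by omega)) h

lemma Cc_zero_left (l : ℕ) : Cc 0 l = 2 ^ l := by rw [Cc_comm]; exact Cc_zero_right l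

/-- `Cc` with a generous summation range. -/
lemma Cc_eq_sum_range {m l K : ℕ} (h : m + 1 ≤ K) : Cc m l = ∑ j ∈ Finset.range K, tt m l j := by
  unfold Cc
  rcases le_or_gt (m + l + 1) K with hK | hK
  · exact Finset.sum_subset (Finset.range_subset_range.2 hK)
      (fun j _ hj => tt_eq_zero_left (by simp at hj ⊢; omega))
  · exact (Finset.sum_subset (Finset.range_subset_range.2 hK.le)
      (fun j _ hj => tt_eq_zero_left (by simp at hj ⊢; omega))).symm

lemma Dd_eq_sum_range {m l K : ℕ} (h : m + 1 ≤ K) : Dd m l = ∑ i ∈ Finset.range K, dd m l i := by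
  unfold Dd
  have hz : ∀ i, m < i → dd m l i = 0 := by
    intro i hi; simp [dd, Nat.choose_eq_zero_of_lt hi]
  rcases le_or_gt (m + l + 1) K with hK | hK
  · exact Finset.sum_subset (Finset.range_subset_range.2 hK)
      (fun j _ hj => hz j (by simp at hj ⊢; omega))
  · exact (Finset.sum_subset (Finset.range_subset_range.2 hK.le)
      (fun j _ hj => hz j (by simp at hj ⊢; omega))).symm

/-- expansion of a shifted term via Pascal's rule (both factors) -/
lemma tt_succ_succ (m l i : ℕ) :
    tt (m+1) (l+1) (i+1) =
      ((Nat.choose m (i+1) : ℤ) + Nat.choose m i) * ((Nat.choose l (i+1) : ℤ) + Nat.choose l i)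
        * 2 ^ (m - i) * 2 ^ (l - i) := by
  unfold tt
  rw [Nat.choose_succ_succ m i, Nat.choose_succ_succ l i, Nat.succ_sub_succ, Nat.succ_sub_succ]
  push_cast
  ring

/-- piece lemma: A-type term equals `4 * tt m l (i+1)` -/
lemma pieceA (m l i : ℕ) :
    (Nat.choose m (i+1) : ℤ) * (Nat.choose l (i+1) : ℤ) * 2 ^ (m - i) * 2 ^ (l - i)
      = 4 * tt m l (i+1) := by
  unfold tt
  rcases le_or_gt (i+1) m with hm | hm
  · rcases le_or_gt (i+1) l with hl | hl
    · have h1 : m - i = (m - (i+1)) + 1 := by omega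
      have h2 : l - i = (l - (i+1)) + 1 := by omega
      rw [h1, h2, pow_succ, pow_succ]; ring
    · simp [Nat.choose_eq_zero_of_lt hl]
  · simp [Nat.choose_eq_zero_of_lt hm]

/-- piece lemma: expanding only the first factor -/
lemma piece1 (m l i : ℕ) :
    (Nat.choose m (i+1) : ℤ) * (Nat.choose (l+1) (i+1) : ℤ) * 2 ^ (m - i) * 2 ^ (l - i)
      = 2 * tt m (l+1) (i+1) := by
  unfold tt
  rcases le_or_gt (i+1) m with hm | hm
  · have h1 : m - i = (m - (i+1)) + 1 := by omega
    have h2 : (l+1) - (i+1) = l - i := Nat.succ_sub_succ l i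
    rw [h1, h2, pow_succ]; ring
  · simp [Nat.choose_eq_zero_of_lt hm]

lemma piece2 (m l i : ℕ) :
    (Nat.choose m i : ℤ) * (Nat.choose (l+1) (i+1) : ℤ) * 2 ^ (m - i) * 2 ^ (l - i)
      = dd m l i + tt m l i := by
  unfold dd tt
  rw [Nat.choose_succ_succ l i]
  push_cast
  ring

/-- E1 : first-factor Pascal expansion -/
lemma E1 (m l : ℕ) : Cc (m+1) (l+1) = 2 * Cc m (l+1) + Cc m l + Dd m l := by
  have key : Cc (m+1) (l+1) = ∑ i ∈ Finset.range (m+l+2), tt (m+1) (l+1) (i+1)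
      + 2^(m+1) * 2^(l+1) := by
    rw [Cc_eq_sum_range (K := m+l+3) (by omega), Finset.sum_range_succ']
    congr 1
    simp [tt]
  have expand : ∀ i, tt (m+1) (l+1) (i+1) = 2 * tt m (l+1) (i+1) + (dd m l i + tt m l i) := by
    intro i
    rw [tt_succ_succ]
    have e1 := piece1 m l i
    have e2 := piece2 m l i
    have : ((Nat.choose m (i+1) : ℤ) + Nat.choose m i) * ((Nat.choose l (i+1) : ℤ) + Nat.choose l i)
        * 2 ^ (m - i) * 2 ^ (l - i)
      = (Nat.choose m (i+1) : ℤ) * (Nat.choose (l+1) (i+1) : ℤ) * 2 ^ (m - i) * 2 ^ (l - i)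
        + (Nat.choose m i : ℤ) * (Nat.choose (l+1) (i+1) : ℤ) * 2 ^ (m - i) * 2 ^ (l - i) := by
      rw [Nat.choose_succ_succ l i]; push_cast; ring
    rw [this, e1, e2]
  rw [key]
  rw [Finset.sum_congr rfl (fun i _ => expand i)]
  rw [Finset.sum_add_distrib, Finset.sum_add_distrib]
  have hs : (∑ i ∈ Finset.range (m+l+2), tt m (l+1) (i+1)) = Cc m (l+1) - 2^m * 2^(l+1) := by
    have h : Cc m (l+1) = ∑ j ∈ Finset.range (m+l+3), tt m (l+1) j :=
      Cc_eq_sum_range (by omega)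
    rw [Finset.sum_range_succ'] at h
    have h0 : tt m (l+1) 0 = 2^m * 2^(l+1) := by simp [tt]
    rw [h0] at h
    linarith
  have hA : ∑ i ∈ Finset.range (m+l+2), 2 * tt m (l+1) (i+1)
      = 2 * (Cc m (l+1) - 2^m * 2^(l+1)) := by
    rw [← Finset.mul_sum, hs]
  have hD : ∑ i ∈ Finset.range (m+l+2), dd m l i = Dd m l := (Dd_eq_sum_range (by omega)).symm
  have hC : ∑ i ∈ Finset.range (m+l+2), tt m l i = Cc m l := (Cc_eq_sum_range (by omega)).symm
  rw [hA, hD, hC]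
  ring


/-- E3 : both-factor Pascal expansion -/
lemma E3 (m l : ℕ) : Cc (m+1) (l+1) = 5 * Cc m l + Dd m l + Dd l m := by
  have key : Cc (m+1) (l+1) = ∑ i ∈ Finset.range (m+l+2), tt (m+1) (l+1) (i+1)
      + 2^(m+1) * 2^(l+1) := by
    rw [Cc_eq_sum_range (K := m+l+3) (by omega), Finset.sum_range_succ']
    congr 1
    simp [tt]
  have expand : ∀ i, tt (m+1) (l+1) (i+1)
      = 4 * tt m l (i+1) + dd l m i + dd m l i + tt m l i := by
    intro i
    rw [tt_succ_succ]
    have eA := pieceA m l i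
    have : ((Nat.choose m (i+1) : ℤ) + Nat.choose m i) * ((Nat.choose l (i+1) : ℤ) + Nat.choose l i)
        * 2 ^ (m - i) * 2 ^ (l - i)
      = (Nat.choose m (i+1) : ℤ) * (Nat.choose l (i+1) : ℤ) * 2 ^ (m - i) * 2 ^ (l - i)
        + dd l m i + dd m l i + tt m l i := by
      unfold dd tt; push_cast; ring
    rw [this, eA]
  have hs : (∑ i ∈ Finset.range (m+l+2), tt m l (i+1)) = Cc m l - 2^m * 2^l := by
    have h : Cc m l = ∑ j ∈ Finset.range (m+l+3), tt m l j := Cc_eq_sum_range (by omega)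
    rw [Finset.sum_range_succ'] at h
    have h0 : tt m l 0 = 2^m * 2^l := by simp [tt]
    rw [h0] at h
    linarith
  rw [key, Finset.sum_congr rfl (fun i _ => expand i)]
  rw [Finset.sum_add_distrib, Finset.sum_add_distrib, Finset.sum_add_distrib, ← Finset.mul_sum, hs]
  have hD1 : ∑ i ∈ Finset.range (m+l+2), dd m l i = Dd m l := (Dd_eq_sum_range (by omega)).symm
  have hD2 : ∑ i ∈ Finset.range (m+l+2), dd l m i = Dd l m := by
    rw [Dd_eq_sum_range (m := l) (l := m) (K := m+l+2) (by omega)]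
  have hC : ∑ i ∈ Finset.range (m+l+2), tt m l i = Cc m l := (Cc_eq_sum_range (by omega)).symm
  rw [hD1, hD2, hC]
  ring

/-- E4 : near-diagonal expansion -/
lemma E4 (m : ℕ) : 2 * Cc (m+1) m = 4 * Cc m m + Dd m m := by
  rcases Nat.eq_zero_or_pos m with rfl | hm
  · decide
  obtain ⟨l, rfl⟩ : ∃ l, m = l + 1 := ⟨m - 1, by omega⟩
  set n := l + 1 with hn
  -- Cc (n+1) n, sum over range (n+1+n+1) = range (2n+2)
  have key : Cc (n+1) n = ∑ i ∈ Finset.range (2*n+1), tt (n+1) n (i+1) + 2^(n+1) * 2^n := by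
    rw [Cc_eq_sum_range (K := 2*n+2) (by omega)]
    have h2 : 2*n + 2 = (2*n+1) + 1 := by omega
    rw [h2, Finset.sum_range_succ']
    congr 1
    simp [tt]
  have expand : ∀ i, 2 * tt (n+1) n (i+1) = 4 * tt n n (i+1) + dd n n i := by
    intro i
    have hsub : n + 1 - (i + 1) = n - i := Nat.succ_sub_succ n i
    unfold tt dd
    rw [Nat.choose_succ_succ n i, hsub]
    rcases le_or_gt (i+1) n with hl | hl
    · have h1 : n - i = (n - (i+1)) + 1 := by omega
      rw [h1, pow_succ]
      push_cast
      ring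
    · simp [Nat.choose_eq_zero_of_lt hl]
  have hs : (∑ i ∈ Finset.range (2*n+1), tt n n (i+1)) = Cc n n - 2^n * 2^n := by
    have h : Cc n n = ∑ j ∈ Finset.range (2*n+2), tt n n j :=
      Cc_eq_sum_range (K := 2*n+2) (by omega)
    have h2 : 2*n + 2 = (2*n+1) + 1 := by omega
    rw [h2, Finset.sum_range_succ'] at h
    have h0 : tt n n 0 = 2^n * 2^n := by simp [tt]
    rw [h0] at h
    linarith
  have hD : ∑ i ∈ Finset.range (2*n+1), dd n n i = Dd n n := by
    rw [Dd_eq_sum_range (m := n) (l := n) (K := 2*n+1) (by omega)]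
  calc 2 * Cc (n+1) n
      = ∑ i ∈ Finset.range (2*n+1), 2 * tt (n+1) n (i+1) + 2 * (2^(n+1) * 2^n) := by
        rw [key, ← Finset.mul_sum]; ring
    _ = ∑ i ∈ Finset.range (2*n+1), (4 * tt n n (i+1) + dd n n i) + 2 * (2^(n+1) * 2^n) := by
        rw [Finset.sum_congr rfl (fun i _ => expand i)]
    _ = 4 * (Cc n n - 2^n * 2^n) + Dd n n + 2 * (2^(n+1) * 2^n) := by
        rw [Finset.sum_add_distrib, ← Finset.mul_sum, hs, hD]
    _ = 4 * Cc n n + Dd n n := by ring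

/-- The key Pascal-style identity : Cc is the kernel of 1-2u-2v+3uv. -/
lemma CcP (m l : ℕ) : Cc (m+1) (l+1) = 2 * Cc m (l+1) + 2 * Cc (m+1) l - 3 * Cc m l := by
  have e1 := E1 m l
  have e2 := E1 l m
  have e3 := E3 m l
  rw [Cc_comm (l+1) (m+1), Cc_comm l (m+1), Cc_comm l m] at e2
  linarith

/-- The diagonal contiguity identity. -/
lemma CcQ (m : ℕ) : Cc (m+1) (m+1) + 3 * Cc m m = 4 * Cc (m+1) m := by
  have e3 := E3 m m
  have e4 := E4 m
  linarith



/-! ### Closed-form counting functions -/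

def fAc : ℕ → ℕ → ℤ
  | 0, 0 => 1
  | M+1, 0 => 2 ^ M
  | 0, L+1 => 2 ^ L
  | M+1, L+1 => Cc (M+1) (L+1) - Cc M (L+1) - Cc (M+1) L + Cc M L

def fPc : ℕ → ℕ → ℤ
  | 0, _ => 0
  | M+1, 0 => 2 ^ M
  | M+1, L+1 => Cc M (L+1) - Cc M L

def fMc (M L : ℕ) : ℤ := fPc L M

lemma fAc_comm (M L : ℕ) : fAc M L = fAc L M := by
  match M, L with
  | 0, 0 => rfl
  | M+1, 0 => rfl
  | 0, L+1 => rfl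
  | M+1, L+1 =>
    show Cc (M+1) (L+1) - Cc M (L+1) - Cc (M+1) L + Cc M L
      = Cc (L+1) (M+1) - Cc L (M+1) - Cc (L+1) M + Cc L M
    rw [Cc_comm (M+1) (L+1), Cc_comm M (L+1), Cc_comm (M+1) L, Cc_comm M L]
    ring

/-- recurrence L1 -/
lemma fPc_succ (M L : ℕ) : fPc (M+1) L = fAc M L + fPc M L := by
  match M, L with
  | 0, 0 => rfl
  | 0, L+1 =>
    show Cc 0 (L+1) - Cc 0 L = 2 ^ L + 0
    rw [Cc_zero_left, Cc_zero_left]; ring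
  | M+1, 0 =>
    show (2:ℤ) ^ (M+1) = 2 ^ M + 2 ^ M
    ring
  | M+1, L+1 =>
    show Cc (M+1) (L+1) - Cc (M+1) L
      = (Cc (M+1) (L+1) - Cc M (L+1) - Cc (M+1) L + Cc M L) + (Cc M (L+1) - Cc M L)
    ring

/-- recurrence L2 -/
lemma fMc_succ (M L : ℕ) : fMc M (L+1) = fAc M L + fMc M L := by
  unfold fMc
  rw [fPc_succ, fAc_comm]

/-- recurrence L3, uses the key Pascal identity -/
lemma fAc_eq_add (M L : ℕ) (h : M + L ≠ 0) : fAc M L = fPc M L + fMc M L := by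
  match M, L with
  | 0, 0 => omega
  | M+1, 0 =>
    show (2:ℤ) ^ M = 2 ^ M + fPc 0 (M+1)
    show (2:ℤ) ^ M = 2 ^ M + 0
    ring
  | 0, L+1 =>
    show (2:ℤ) ^ L = 0 + fPc (L+1) 0
    show (2:ℤ) ^ L = 0 + 2 ^ L
    ring
  | M+1, L+1 =>
    show Cc (M+1) (L+1) - Cc M (L+1) - Cc (M+1) L + Cc M L
      = (Cc M (L+1) - Cc M L) + fPc (L+1) (M+1)
    show Cc (M+1) (L+1) - Cc M (L+1) - Cc (M+1) L + Cc M L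
      = (Cc M (L+1) - Cc M L) + (Cc L (M+1) - Cc L M)
    have hp := CcP M L
    rw [Cc_comm L (M+1), Cc_comm L M]
    linarith

/-! ### The sets of lists -/

/-- sum of absolute values -/
def absSum (ν : List ℤ) : ℤ := (ν.map (fun x => |x|)).sum

/-- lists of nonzero integers with given absolute sum and sum (in mass coordinates) -/
def SA (M L : ℕ) : Set (List ℤ) :=
  {ν | (∀ x ∈ ν, x ≠ 0) ∧ absSum ν = (M : ℤ) + L ∧ ν.sum = (M : ℤ) - L}

def SP (M L : ℕ) : Set (List ℤ) :=
  {ν | ν ∈ SA M L ∧ ∃ a t, ν = a :: t ∧ 0 < a}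

def SM (M L : ℕ) : Set (List ℤ) :=
  {ν | ν ∈ SA M L ∧ ∃ a t, ν = a :: t ∧ a < 0}

lemma absSum_nil : absSum [] = 0 := rfl

lemma absSum_cons (a : ℤ) (t : List ℤ) : absSum (a :: t) = |a| + absSum t := by
  simp [absSum]

lemma absSum_nonneg (ν : List ℤ) : 0 ≤ absSum ν :=
  List.sum_nonneg (by simp)

/-- absSum + sum is a sum of nonnegative even terms -/
lemma absSum_add_sum_nonneg (ν : List ℤ) : 0 ≤ absSum ν + ν.sum := by
  induction ν with
  | nil => simp [absSum]
  | cons a t ih =>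
    rw [absSum_cons, List.sum_cons]
    have : 0 ≤ |a| + a := by
      have := neg_abs_le a; linarith
    linarith

lemma absSum_sub_sum_nonneg (ν : List ℤ) : 0 ≤ absSum ν - ν.sum := by
  induction ν with
  | nil => simp [absSum]
  | cons a t ih =>
    rw [absSum_cons, List.sum_cons]
    have := le_abs_self a
    linarith

lemma SA_zero_zero : SA 0 0 = {([] : List ℤ)} := by
  ext ν
  simp only [SA, Set.mem_setOf_eq, Set.mem_singleton_iff]
  constructor
  · rintro ⟨hnz, habs, hsum⟩
    cases ν with
    | nil => rfl
    | cons a t =>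
      exfalso
      rw [absSum_cons] at habs
      have h1 : (0:ℤ) ≤ absSum t := absSum_nonneg t
      have h2 : a ≠ 0 := hnz a (by simp)
      have h3 : 0 < |a| := abs_pos.2 h2
      push_cast at habs
      omega
  · rintro rfl
    refine ⟨by simp, by simp [absSum], by simp⟩

lemma SP_zero (L : ℕ) : SP 0 L = ∅ := by
  ext ν
  simp only [SP, Set.mem_setOf_eq, Set.mem_empty_iff_false, iff_false]
  rintro ⟨⟨hnz, habs, hsum⟩, a, t, rfl, ha⟩
  rw [absSum_cons] at habs
  rw [List.sum_cons] at hsum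
  have h1 : 0 ≤ absSum t + t.sum := absSum_add_sum_nonneg t
  have h2 : |a| = a := abs_of_pos ha
  push_cast at habs hsum
  omega

lemma SM_zero (M : ℕ) : SM M 0 = ∅ := by
  ext ν
  simp only [SM, Set.mem_setOf_eq, Set.mem_empty_iff_false, iff_false]
  rintro ⟨⟨hnz, habs, hsum⟩, a, t, rfl, ha⟩
  rw [absSum_cons] at habs
  rw [List.sum_cons] at hsum
  have h1 : 0 ≤ absSum t - t.sum := absSum_sub_sum_nonneg t
  have h2 : |a| = -a := abs_of_neg ha
  push_cast at habs hsum
  omega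

/-- decomposition of SA into SP and SM -/
lemma SA_eq_union (M L : ℕ) (h : M + L ≠ 0) : SA M L = SP M L ∪ SM M L := by
  ext ν
  simp only [SP, SM, Set.mem_union, Set.mem_setOf_eq]
  constructor
  · intro hν
    cases ν with
    | nil =>
      exfalso
      obtain ⟨_, habs, _⟩ := hν
      rw [absSum_nil] at habs
      have : (M:ℤ) + L ≠ 0 := by push_cast; omega
      exact this habs.symm
    | cons a t =>
      have ha : a ≠ 0 := hν.1 a (by simp)
      rcases lt_trichotomy a 0 with h1 | h2 | h3
      · right; exact ⟨hν, a, t, rfl, h1⟩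
      · exact absurd h2 ha
      · left; exact ⟨hν, a, t, rfl, h3⟩
  · rintro (⟨hν, _⟩ | ⟨hν, _⟩) <;> exact hν

lemma SP_SM_disjoint (M L : ℕ) : Disjoint (SP M L) (SM M L) := by
  rw [Set.disjoint_iff_inter_eq_empty]
  ext ν
  simp only [Set.mem_inter_iff, SP, SM, Set.mem_setOf_eq, Set.mem_empty_iff_false, iff_false]
  rintro ⟨⟨_, a, t, rfl, ha⟩, ⟨_, a', t', heq, ha'⟩⟩
  rw [List.cons.injEq] at heq
  omega

/-! ### Bijections -/

def incHead : List ℤ → List ℤ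
  | [] => []
  | a :: t => (a+1) :: t

def decHead : List ℤ → List ℤ
  | [] => []
  | a :: t => (a-1) :: t

lemma SP_succ_eq (M L : ℕ) :
    SP (M+1) L = (fun t => (1:ℤ) :: t) '' SA M L ∪ incHead '' SP M L := by
  ext ν
  simp only [Set.mem_union, Set.mem_image]
  constructor
  · rintro ⟨⟨hnz, habs, hsum⟩, a, t, rfl, ha⟩
    rw [absSum_cons] at habs
    rw [List.sum_cons] at hsum
    have haa : |a| = a := abs_of_pos ha
    rcases eq_or_lt_of_le (show (1:ℤ) ≤ a by omega) with h1 | h2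
    · -- a = 1
      left
      refine ⟨t, ⟨fun x hx => hnz x (by simp [hx]), ?_, ?_⟩,
        by have h9 : a = 1 := (by omega : a = 1)
           rw [h9]⟩
      · push_cast at habs ⊢; omega
      · push_cast at hsum ⊢; omega
    · -- a ≥ 2
      right
      refine ⟨(a-1) :: t, ⟨⟨?_, ?_, ?_⟩, a-1, t, rfl, by omega⟩, ?_⟩
      · intro x hx
        rcases List.mem_cons.1 hx with rfl | hx
        · omega
        · exact hnz x (by simp [hx])
      · rw [absSum_cons]
        have : |a - 1| = a - 1 := abs_of_pos (by omega)
        rw [this]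
        push_cast at habs ⊢; omega
      · rw [List.sum_cons]
        push_cast at hsum ⊢; omega
      · show incHead ((a-1) :: t) = a :: t
        simp [incHead]
  · rintro (⟨t, ⟨hnz, habs, hsum⟩, rfl⟩ | ⟨ν', ⟨⟨hnz, habs, hsum⟩, a, t, rfl, ha⟩, rfl⟩)
    · refine ⟨⟨?_, ?_, ?_⟩, 1, t, rfl, one_pos⟩
      · intro x hx
        rcases List.mem_cons.1 hx with rfl | hx
        · omega
        · exact hnz x hx
      · rw [absSum_cons]; push_cast at habs ⊢; simp; omega
      · rw [List.sum_cons]; push_cast at hsum ⊢; omega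
    · rw [absSum_cons] at habs
      rw [List.sum_cons] at hsum
      have haa : |a| = a := abs_of_pos ha
      show ((a+1) :: t) ∈ SP (M+1) L
      refine ⟨⟨?_, ?_, ?_⟩, a+1, t, rfl, by omega⟩
      · intro x hx
        rcases List.mem_cons.1 hx with rfl | hx
        · omega
        · exact hnz x (by simp [hx])
      · rw [absSum_cons]
        have : |a + 1| = a + 1 := abs_of_pos (by omega)
        rw [this]
        push_cast at habs ⊢; omega
      · rw [List.sum_cons]; push_cast at hsum ⊢; omega

lemma SM_succ_eq (M L : ℕ) :
    SM M (L+1) = (fun t => (-1:ℤ) :: t) '' SA M L ∪ decHead '' SM M L := by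
  ext ν
  simp only [Set.mem_union, Set.mem_image]
  constructor
  · rintro ⟨⟨hnz, habs, hsum⟩, a, t, rfl, ha⟩
    rw [absSum_cons] at habs
    rw [List.sum_cons] at hsum
    have haa : |a| = -a := abs_of_neg ha
    rcases eq_or_lt_of_le (show a ≤ -1 by omega) with h1 | h2
    · -- a = -1
      left
      refine ⟨t, ⟨fun x hx => hnz x (by simp [hx]), ?_, ?_⟩,
        by have h9 : a = -1 := (by omega : a = -1)
           rw [h9]⟩
      · push_cast at habs ⊢; omega
      · push_cast at hsum ⊢; omega
    · -- a ≤ -2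
      right
      refine ⟨(a+1) :: t, ⟨⟨?_, ?_, ?_⟩, a+1, t, rfl, by omega⟩, ?_⟩
      · intro x hx
        rcases List.mem_cons.1 hx with rfl | hx
        · omega
        · exact hnz x (by simp [hx])
      · rw [absSum_cons]
        have : |a + 1| = -(a + 1) := abs_of_neg (by omega)
        rw [this]
        push_cast at habs ⊢; omega
      · rw [List.sum_cons]
        push_cast at hsum ⊢; omega
      · show decHead ((a+1) :: t) = a :: t
        simp [decHead]
  · rintro (⟨t, ⟨hnz, habs, hsum⟩, rfl⟩ | ⟨ν', ⟨⟨hnz, habs, hsum⟩, a, t, rfl, ha⟩, rfl⟩)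
    · refine ⟨⟨?_, ?_, ?_⟩, -1, t, rfl, by omega⟩
      · intro x hx
        rcases List.mem_cons.1 hx with rfl | hx
        · omega
        · exact hnz x hx
      · rw [absSum_cons]; push_cast at habs ⊢; simp; omega
      · rw [List.sum_cons]; push_cast at hsum ⊢; omega
    · rw [absSum_cons] at habs
      rw [List.sum_cons] at hsum
      have haa : |a| = -a := abs_of_neg ha
      show ((a-1) :: t) ∈ SM M (L+1)
      refine ⟨⟨?_, ?_, ?_⟩, a-1, t, rfl, by omega⟩
      · intro x hx
        rcases List.mem_cons.1 hx with rfl | hx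
        · omega
        · exact hnz x (by simp [hx])
      · rw [absSum_cons]
        have : |a - 1| = -(a - 1) := abs_of_neg (by omega)
        rw [this]
        push_cast at habs ⊢; omega
      · rw [List.sum_cons]; push_cast at hsum ⊢; omega

lemma incHead_injOn (M L : ℕ) : Set.InjOn incHead (SP M L) := by
  rintro x ⟨_, a, t, rfl, _⟩ y ⟨_, b, u, rfl, _⟩ h
  simp only [incHead, List.cons.injEq] at h
  obtain ⟨h1, h2⟩ := h
  rw [h2]
  congr 1
  omega

lemma decHead_injOn (M L : ℕ) : Set.InjOn decHead (SM M L) := by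
  rintro x ⟨_, a, t, rfl, _⟩ y ⟨_, b, u, rfl, _⟩ h
  simp only [decHead, List.cons.injEq] at h
  obtain ⟨h1, h2⟩ := h
  rw [h2]
  congr 1
  omega

lemma SP_succ_card (M L : ℕ) (hA : (SA M L).Finite) (hP : (SP M L).Finite) :
    (SP (M+1) L).Finite ∧ (SP (M+1) L).ncard = (SA M L).ncard + (SP M L).ncard := by
  rw [SP_succ_eq]
  have hinj1 : Set.InjOn (fun t => (1:ℤ) :: t) (SA M L) := by
    intro x _ y _ h; simpa using h
  have hdisj : Disjoint ((fun t => (1:ℤ) :: t) '' SA M L) (incHead '' SP M L) := by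
    rw [Set.disjoint_iff_inter_eq_empty]
    ext ν
    simp only [Set.mem_inter_iff, Set.mem_image, Set.mem_empty_iff_false, iff_false]
    rintro ⟨⟨t, _, rfl⟩, ⟨ν', ⟨_, a, u, rfl, ha⟩, h2⟩⟩
    simp only [incHead, List.cons.injEq] at h2
    omega
  have hf1 : ((fun t => (1:ℤ) :: t) '' SA M L).Finite := hA.image _
  have hf2 : (incHead '' SP M L).Finite := hP.image _
  refine ⟨hf1.union hf2, ?_⟩
  rw [Set.ncard_union_eq hdisj hf1 hf2,
    Set.ncard_image_of_injOn hinj1, Set.ncard_image_of_injOn (incHead_injOn M L)]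

lemma SM_succ_card (M L : ℕ) (hA : (SA M L).Finite) (hM : (SM M L).Finite) :
    (SM M (L+1)).Finite ∧ (SM M (L+1)).ncard = (SA M L).ncard + (SM M L).ncard := by
  rw [SM_succ_eq]
  have hinj1 : Set.InjOn (fun t => (-1:ℤ) :: t) (SA M L) := by
    intro x _ y _ h; simpa using h
  have hdisj : Disjoint ((fun t => (-1:ℤ) :: t) '' SA M L) (decHead '' SM M L) := by
    rw [Set.disjoint_iff_inter_eq_empty]
    ext ν
    simp only [Set.mem_inter_iff, Set.mem_image, Set.mem_empty_iff_false, iff_false]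
    rintro ⟨⟨t, _, rfl⟩, ⟨ν', ⟨_, a, u, rfl, ha⟩, h2⟩⟩
    simp only [decHead, List.cons.injEq] at h2
    omega
  have hf1 : ((fun t => (-1:ℤ) :: t) '' SA M L).Finite := hA.image _
  have hf2 : (decHead '' SM M L).Finite := hM.image _
  refine ⟨hf1.union hf2, ?_⟩
  rw [Set.ncard_union_eq hdisj hf1 hf2,
    Set.ncard_image_of_injOn hinj1, Set.ncard_image_of_injOn (decHead_injOn M L)]

/-- Main counting result. -/
lemma count_main : ∀ k : ℕ, ∀ M L, M + L = k →
    ((SA M L).Finite ∧ (SP M L).Finite ∧ (SM M L).Finite) ∧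
    (((SA M L).ncard : ℤ) = fAc M L ∧ ((SP M L).ncard : ℤ) = fPc M L ∧
      ((SM M L).ncard : ℤ) = fMc M L) := by
  intro k
  induction k using Nat.strong_induction_on with
  | _ k ih =>
    intro M L hk
    -- SP results
    have hSP : (SP M L).Finite ∧ ((SP M L).ncard : ℤ) = fPc M L := by
      match M with
      | 0 =>
        rw [SP_zero]
        exact ⟨Set.finite_empty, by simp [fPc]⟩
      | M'+1 =>
        have hIH := ih (M' + L) (by omega) M' L rfl
        obtain ⟨⟨hfA, hfP, _⟩, hcA, hcP, _⟩ := hIH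
        obtain ⟨hfin, hcard⟩ := SP_succ_card M' L hfA hfP
        refine ⟨hfin, ?_⟩
        rw [hcard, fPc_succ]
        push_cast
        rw [hcA, hcP]
    -- SM results
    have hSM : (SM M L).Finite ∧ ((SM M L).ncard : ℤ) = fMc M L := by
      match L with
      | 0 =>
        rw [SM_zero]
        exact ⟨Set.finite_empty, by simp [fMc, fPc]⟩
      | L'+1 =>
        have hIH := ih (M + L') (by omega) M L' rfl
        obtain ⟨⟨hfA, _, hfM⟩, hcA, _, hcM⟩ := hIH
        obtain ⟨hfin, hcard⟩ := SM_succ_card M L' hfA hfM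
        refine ⟨hfin, ?_⟩
        rw [hcard, fMc_succ]
        push_cast
        rw [hcA, hcM]
    -- SA results
    have hSA : (SA M L).Finite ∧ ((SA M L).ncard : ℤ) = fAc M L := by
      rcases Nat.eq_zero_or_pos (M + L) with h0 | hpos
      · have hM0 : M = 0 := by omega
        have hL0 : L = 0 := by omega
        subst hM0; subst hL0
        rw [SA_zero_zero]
        exact ⟨Set.finite_singleton _, by simp [fAc]⟩
      · rw [SA_eq_union M L (by omega)]
        refine ⟨hSP.1.union hSM.1, ?_⟩
        rw [Set.ncard_union_eq (SP_SM_disjoint M L) hSP.1 hSM.1]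
        rw [fAc_eq_add M L (by omega)]
        push_cast
        rw [hSP.2, hSM.2]
    exact ⟨⟨hSA.1, hSP.1, hSM.1⟩, hSA.2, hSP.2, hSM.2⟩



def TzQ (m j : ℕ) : ℚ := (Nat.choose m j : ℚ)^2 * 4^(m-j)

def rQ (m : ℕ) : ℚ := ∑ j ∈ Finset.range (m+1), TzQ m j

def gcQ (m : ℕ) : ℕ → ℚ
  | 0 => 0
  | i+1 => (Nat.choose m i : ℚ)^2 * 4^(m-i) *
      (14*m*(i+1) - 15*(m:ℚ)^2 - 18*m - 3*(i:ℚ)^2)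

lemma TzQ_zero_of_lt {m j : ℕ} (h : m < j) : TzQ m j = 0 := by
  simp [TzQ, Nat.choose_eq_zero_of_lt h]

/-- certificate identity, middle case -/
lemma cert_mid (i d : ℕ) :
    4*((i:ℚ)+d+2)*((i:ℚ)+d+3)*TzQ (i+d+3) (i+1) - 4*((i:ℚ)+d+2)*(10*((i:ℚ)+d+2)+5)*TzQ (i+d+2) (i+1)
      + 36*((i:ℚ)+d+2)^2*TzQ (i+d+1) (i+1)
    = gcQ (i+d+2) (i+2) - gcQ (i+d+2) (i+1) := by
  have hc1 := Nat.choose_mul_factorial_mul_factorial (show i+1 ≤ i+d+1 by omega)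
  have hc2 := Nat.choose_mul_factorial_mul_factorial (show i+1 ≤ i+d+2 by omega)
  have hc3 := Nat.choose_mul_factorial_mul_factorial (show i+1 ≤ i+d+3 by omega)
  have hc4 := Nat.choose_mul_factorial_mul_factorial (show i ≤ i+d+2 by omega)
  have s1 : i+d+1 - (i+1) = d := by omega
  have s2 : i+d+2 - (i+1) = d+1 := by omega
  have s3 : i+d+3 - (i+1) = d+2 := by omega
  have s4 : i+d+2 - i = d+2 := by omega
  rw [s1] at hc1; rw [s2] at hc2; rw [s3] at hc3; rw [s4] at hc4
  -- pass to ℚ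
  have q1 : (Nat.choose (i+d+1) (i+1) : ℚ) * (((i:ℚ)+1) * (Nat.factorial i) * (Nat.factorial d))
      = Nat.factorial (i+d+1) := by
    have := congrArg (Nat.cast : ℕ → ℚ) hc1
    push_cast [Nat.factorial_succ] at this ⊢
    linarith [this]
  have q2 : (Nat.choose (i+d+2) (i+1) : ℚ) * (((i:ℚ)+1) * (Nat.factorial i) * (((d:ℚ)+1) * (Nat.factorial d)))
      = ((i:ℚ)+d+2) * Nat.factorial (i+d+1) := by
    have := congrArg (Nat.cast : ℕ → ℚ) hc2
    push_cast [Nat.factorial_succ] at this ⊢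
    linarith [this]
  have q3 : (Nat.choose (i+d+3) (i+1) : ℚ) * (((i:ℚ)+1) * (Nat.factorial i) * (((d:ℚ)+2) * (((d:ℚ)+1) * (Nat.factorial d))))
      = ((i:ℚ)+d+3) * (((i:ℚ)+d+2) * Nat.factorial (i+d+1)) := by
    have := congrArg (Nat.cast : ℕ → ℚ) hc3
    push_cast [Nat.factorial_succ] at this ⊢
    linarith [this]
  have q4 : (Nat.choose (i+d+2) i : ℚ) * ((Nat.factorial i) * (((d:ℚ)+2) * (((d:ℚ)+1) * (Nat.factorial d))))
      = ((i:ℚ)+d+2) * Nat.factorial (i+d+1) := by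
    have := congrArg (Nat.cast : ℕ → ℚ) hc4
    push_cast [Nat.factorial_succ] at this ⊢
    linarith [this]
  have hQ0 : (Nat.factorial i : ℚ) ≠ 0 := by exact_mod_cast Nat.factorial_ne_zero i
  have hR0 : (Nat.factorial d : ℚ) ≠ 0 := by exact_mod_cast Nat.factorial_ne_zero d
  have hi1 : ((i:ℚ)+1) ≠ 0 := by positivity
  have hd1 : ((d:ℚ)+1) ≠ 0 := by positivity
  have hd2 : ((d:ℚ)+2) ≠ 0 := by positivity
  have e1 : (Nat.choose (i+d+1) (i+1) : ℚ)
      = (Nat.factorial (i+d+1) : ℚ) / (((i:ℚ)+1) * (Nat.factorial i) * (Nat.factorial d)) := by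
    rw [eq_div_iff (by simp [hQ0, hR0, hi1])]
    linarith [q1]
  have e2 : (Nat.choose (i+d+2) (i+1) : ℚ)
      = ((i:ℚ)+d+2) * (Nat.factorial (i+d+1) : ℚ)
        / (((i:ℚ)+1) * (Nat.factorial i) * (((d:ℚ)+1) * (Nat.factorial d))) := by
    rw [eq_div_iff (by simp [hQ0, hR0, hi1, hd1])]
    linarith [q2]
  have e3 : (Nat.choose (i+d+3) (i+1) : ℚ)
      = ((i:ℚ)+d+3) * (((i:ℚ)+d+2) * (Nat.factorial (i+d+1) : ℚ))
        / (((i:ℚ)+1) * (Nat.factorial i) * (((d:ℚ)+2) * (((d:ℚ)+1) * (Nat.factorial d)))) := by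
    rw [eq_div_iff (by simp [hQ0, hR0, hi1, hd1, hd2])]
    linarith [q3]
  have e4 : (Nat.choose (i+d+2) i : ℚ)
      = ((i:ℚ)+d+2) * (Nat.factorial (i+d+1) : ℚ)
        / ((Nat.factorial i : ℚ) * (((d:ℚ)+2) * (((d:ℚ)+1) * (Nat.factorial d)))) := by
    rw [eq_div_iff (by simp [hQ0, hR0, hd1, hd2])]
    linarith [q4]
  simp only [TzQ, gcQ]
  rw [s1, s2, s3, s4]
  push_cast
  rw [e1, e2, e3, e4]
  rw [pow_succ (4:ℚ) (d+1), pow_succ (4:ℚ) d]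
  field_simp
  ring

/-- full certificate identity -/
lemma cert (μ j : ℕ) :
    4*((μ:ℚ)+1)*((μ:ℚ)+2)*TzQ (μ+2) j - 4*((μ:ℚ)+1)*(10*(μ:ℚ)+15)*TzQ (μ+1) j
      + 36*((μ:ℚ)+1)^2*TzQ μ j
    = gcQ (μ+1) (j+1) - gcQ (μ+1) j := by
  rcases j with _ | i
  · -- j = 0
    simp only [TzQ, gcQ, Nat.choose_zero_right, Nat.sub_zero]
    rw [pow_succ (4:ℚ) (μ+1), pow_succ (4:ℚ) μ]
    push_cast
    ring
  · rcases Nat.lt_or_ge i μ with hi | hi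
    · -- middle case : i + 1 ≤ μ
      obtain ⟨d, rfl⟩ : ∃ d, μ = i + d + 1 := ⟨μ - i - 1, by omega⟩
      have H := cert_mid i d
      rw [show i+d+1+2 = i+d+3 from by omega, show i+d+1+1 = i+d+2 from by omega,
        show i+1+1 = i+2 from by omega]
      push_cast
      push_cast at H
      linear_combination H
    · rcases eq_or_lt_of_le hi with heq | hi2
      · -- j = μ + 1  (i = μ)
        obtain rfl : μ = i := heq
        have t1 : TzQ (μ+2) (μ+1) = ((μ:ℚ)+2)^2 * 4 := by
          simp only [TzQ]
          rw [show μ+2 = (μ+1)+1 from rfl, Nat.choose_succ_self_right,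
            show μ+1+1 - (μ+1) = 1 from by omega]
          push_cast; ring
        have t2 : TzQ (μ+1) (μ+1) = 1 := by
          simp [TzQ, Nat.choose_self]
        have t3 : TzQ μ (μ+1) = 0 := TzQ_zero_of_lt (by omega)
        have g1 : gcQ (μ+1) (μ+2) = 14*((μ:ℚ)+1)*((μ:ℚ)+2) - 15*((μ:ℚ)+1)^2 - 18*((μ:ℚ)+1)
            - 3*((μ:ℚ)+1)^2 := by
          show (Nat.choose (μ+1) (μ+1) : ℚ)^2 * 4^((μ+1) - (μ+1)) *
            (14*((μ+1 : ℕ):ℚ)*(((μ+1 : ℕ):ℚ)+1) - 15*((μ+1 : ℕ):ℚ)^2 - 18*((μ+1 : ℕ):ℚ)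
              - 3*((μ+1 : ℕ):ℚ)^2) = _
          rw [Nat.choose_self, show (μ+1) - (μ+1) = 0 from by omega]
          push_cast; ring
        have g2 : gcQ (μ+1) (μ+1) = ((μ:ℚ)+1)^2 * 4 *
            (14*((μ:ℚ)+1)*((μ:ℚ)+1) - 15*((μ:ℚ)+1)^2 - 18*((μ:ℚ)+1) - 3*(μ:ℚ)^2) := by
          show (Nat.choose (μ+1) μ : ℚ)^2 * 4^((μ+1) - μ) *
            (14*((μ+1 : ℕ):ℚ)*((μ:ℚ)+1) - 15*((μ+1 : ℕ):ℚ)^2 - 18*((μ+1 : ℕ):ℚ) - 3*(μ:ℚ)^2) = _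
          rw [Nat.choose_succ_self_right, show (μ+1) - μ = 1 from by omega]
          push_cast; ring
        rw [show μ+1+1 = μ+2 from by omega] at g1 ⊢
        rw [t1, t2, t3, g1, g2]
        push_cast
        ring
      · rcases eq_or_lt_of_le (show μ + 1 ≤ i by omega) with heq2 | h4
        · -- j = μ + 2  (i = μ + 1)
          obtain rfl : μ + 1 = i := heq2
          have t1 : TzQ (μ+2) (μ+2) = 1 := by simp [TzQ, Nat.choose_self]
          have t2 : TzQ (μ+1) (μ+2) = 0 := TzQ_zero_of_lt (by omega)
          have t3 : TzQ μ (μ+2) = 0 := TzQ_zero_of_lt (by omega)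
          have g1 : gcQ (μ+1) (μ+3) = 0 := by
            show (Nat.choose (μ+1) (μ+2) : ℚ)^2 * _ * _ = 0
            rw [Nat.choose_eq_zero_of_lt (by omega)]
            push_cast; ring
          have g2 : gcQ (μ+1) (μ+2) = 14*((μ:ℚ)+1)*((μ:ℚ)+2) - 15*((μ:ℚ)+1)^2
              - 18*((μ:ℚ)+1) - 3*((μ:ℚ)+1)^2 := by
            show (Nat.choose (μ+1) (μ+1) : ℚ)^2 * 4^((μ+1) - (μ+1)) *
              (14*((μ+1 : ℕ):ℚ)*(((μ+1 : ℕ):ℚ)+1) - 15*((μ+1 : ℕ):ℚ)^2 - 18*((μ+1 : ℕ):ℚ)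
                - 3*((μ+1 : ℕ):ℚ)^2) = _
            rw [Nat.choose_self, show (μ+1) - (μ+1) = 0 from by omega]
            push_cast; ring
          rw [show μ+1+1 = μ+2 from by omega]
          rw [show μ+2+1 = μ+3 from by omega]
          rw [t1, t2, t3, g1, g2]
          push_cast
          ring
        · -- i ≥ μ + 2
          have t1 : TzQ (μ+2) (i+1) = 0 := TzQ_zero_of_lt (by omega)
          have t2 : TzQ (μ+1) (i+1) = 0 := TzQ_zero_of_lt (by omega)
          have t3 : TzQ μ (i+1) = 0 := TzQ_zero_of_lt (by omega)
          have g1 : gcQ (μ+1) (i+2) = 0 := by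
            show (Nat.choose (μ+1) (i+1) : ℚ)^2 * _ * _ = 0
            rw [Nat.choose_eq_zero_of_lt (by omega)]
            push_cast; ring
          have g2 : gcQ (μ+1) (i+1) = 0 := by
            show (Nat.choose (μ+1) i : ℚ)^2 * _ * _ = 0
            rw [Nat.choose_eq_zero_of_lt (by omega)]
            push_cast; ring
          rw [show i+1+1 = i+2 from by omega]
          rw [t1, t2, t3, g1, g2]
          ring

/-- the three-term recurrence for the diagonal sequence -/
lemma RRQ (μ : ℕ) :
    4*((μ:ℚ)+1)*((μ:ℚ)+2)*rQ (μ+2) - 4*((μ:ℚ)+1)*(10*(μ:ℚ)+15)*rQ (μ+1)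
      + 36*((μ:ℚ)+1)^2*rQ μ = 0 := by
  have tele : ∑ j ∈ Finset.range (μ+3), (gcQ (μ+1) (j+1) - gcQ (μ+1) j)
      = gcQ (μ+1) (μ+3) - gcQ (μ+1) 0 := Finset.sum_range_sub (gcQ (μ+1)) (μ+3)
  have g0 : gcQ (μ+1) 0 = 0 := rfl
  have gtop : gcQ (μ+1) (μ+3) = 0 := by
    show (Nat.choose (μ+1) (μ+2) : ℚ)^2 * _ * _ = 0
    rw [Nat.choose_eq_zero_of_lt (by omega)]
    push_cast; ring
  have hsum : ∑ j ∈ Finset.range (μ+3),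
      (4*((μ:ℚ)+1)*((μ:ℚ)+2)*TzQ (μ+2) j - 4*((μ:ℚ)+1)*(10*(μ:ℚ)+15)*TzQ (μ+1) j
        + 36*((μ:ℚ)+1)^2*TzQ μ j) = 0 := by
    rw [Finset.sum_congr rfl (fun j _ => cert μ j), tele, g0, gtop]
    ring
  have h1 : ∑ j ∈ Finset.range (μ+3), TzQ (μ+2) j = rQ (μ+2) := rfl
  have h2 : ∑ j ∈ Finset.range (μ+3), TzQ (μ+1) j = rQ (μ+1) := by
    unfold rQ
    rw [show μ+3 = (μ+2)+1 from rfl, Finset.sum_range_succ, TzQ_zero_of_lt (by omega)]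
    ring
  have h3 : ∑ j ∈ Finset.range (μ+3), TzQ μ j = rQ μ := by
    unfold rQ
    rw [show μ+3 = (μ+2)+1 from rfl, Finset.sum_range_succ,
      show μ+2 = (μ+1)+1 from rfl, Finset.sum_range_succ,
      TzQ_zero_of_lt (show μ < μ+2 from by omega), TzQ_zero_of_lt (show μ < μ+1 from by omega)]
    ring
  rw [Finset.sum_add_distrib, Finset.sum_sub_distrib, ← Finset.mul_sum, ← Finset.mul_sum,
    ← Finset.mul_sum, h1, h2, h3] at hsum
  linarith


lemma rQ_zero : rQ 0 = 1 := by simp [rQ, TzQ]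

lemma rQ_one : rQ 1 = 5 := by
  norm_num [rQ, TzQ, Finset.sum_range_succ]

lemma rQ_eq_Cc (m : ℕ) : rQ m = ((Cc m m : ℤ) : ℚ) := by
  have hterm : ∀ j, ((tt m m j : ℤ) : ℚ) = TzQ m j := by
    intro j
    unfold tt TzQ
    push_cast
    rw [show (4:ℚ) = 2*2 from by norm_num, mul_pow]
    ring
  have hext : rQ m = ∑ j ∈ Finset.range (m+m+1), TzQ m j := by
    unfold rQ
    exact Finset.sum_subset (Finset.range_subset_range.2 (by omega))
      (fun j _ hj => TzQ_zero_of_lt (by simp at hj ⊢; omega))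
  rw [hext, Cc]
  push_cast
  exact Finset.sum_congr rfl (fun j _ => (hterm j).symm)

lemma two_fAc_diag (M : ℕ) : 2 * fAc (M+1) (M+1) = Cc (M+1) (M+1) - Cc M M := by
  show 2 * (Cc (M+1) (M+1) - Cc M (M+1) - Cc (M+1) M + Cc M M) = _
  have h1 := CcQ M
  have h2 := Cc_comm M (M+1)
  linarith

lemma two_fAc_diag_q (M : ℕ) :
    2 * ((fAc (M+1) (M+1) : ℤ) : ℚ) = rQ (M+1) - rQ M := by
  have h := two_fAc_diag M
  have h2 : ((2 * fAc (M+1) (M+1) : ℤ) : ℚ) = ((Cc (M+1) (M+1) - Cc M M : ℤ) : ℚ) := by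
    exact_mod_cast congrArg (fun z : ℤ => (z : ℚ)) h
  push_cast at h2
  rw [rQ_eq_Cc, rQ_eq_Cc]
  linarith

lemma SA_spec (M L : ℕ) : SA M L =
    {ν : List ℤ | (∀ x ∈ ν, x ≠ 0) ∧ absSum ν = (M : ℤ) + L ∧ ν.sum = (M : ℤ) - L} := rfl

end G0aux

noncomputable def G0 : PowerSeries ℚ :=
  PowerSeries.mk (fun κ => if κ = 0 then 1 else
    (Set.ncard {ν : List ℤ | (∀ x ∈ ν, x ≠ 0) ∧
      (ν.map (fun x => |x|)).sum = (κ : ℤ) ∧ ν.sum = 0} : ℚ))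

namespace G0aux

noncomputable def Rser : PowerSeries ℚ :=
  PowerSeries.mk fun n => if 2 ∣ n then rQ (n / 2) else 0

lemma Rser_even (M : ℕ) : (coeff (2*M)) Rser = rQ M := by
  simp only [Rser, coeff_mk]
  rw [if_pos ⟨M, rfl⟩, Nat.mul_div_cancel_left M (by norm_num)]

lemma Rser_odd (M : ℕ) : (coeff (2*M+1)) Rser = 0 := by
  simp only [Rser, coeff_mk]
  rw [if_neg (by omega)]

/-- the parity vanishing of the counts -/
lemma Aset_odd (n : ℕ) (hodd : ¬ 2 ∣ n) :
    {ν : List ℤ | (∀ x ∈ ν, x ≠ 0) ∧ (ν.map (fun x => |x|)).sum = (n : ℤ) ∧ ν.sum = 0} = ∅ := by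
  ext ν
  simp only [Set.mem_setOf_eq, Set.mem_empty_iff_false, iff_false]
  rintro ⟨hnz, habs, hsum⟩
  have heven : ∀ l : List ℤ, Even ((l.map (fun x => |x|)).sum - l.sum) := by
    intro l
    induction l with
    | nil => simp
    | cons a t ih =>
      simp only [List.map_cons, List.sum_cons]
      have h2 : Even (|a| - a) := by
        rcases abs_choice a with h | h <;> rw [h]
        · simp
        · exact ⟨-a, by ring⟩
      have : |a| + (t.map (fun x => |x|)).sum - (a + t.sum)
          = (|a| - a) + ((t.map (fun x => |x|)).sum - t.sum) := by ring
      rw [this]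
      exact h2.add ih
  have h3 := heven ν
  rw [habs, hsum] at h3
  simp only [sub_zero] at h3
  have h4 : Even n := by exact_mod_cast h3
  rcases h4 with ⟨k, hk⟩
  omega

lemma Aset_even (M : ℕ) :
    {ν : List ℤ | (∀ x ∈ ν, x ≠ 0) ∧ (ν.map (fun x => |x|)).sum = ((2*M : ℕ) : ℤ) ∧ ν.sum = 0}
      = SA M M := by
  rw [SA_spec]
  ext ν
  simp only [Set.mem_setOf_eq]
  constructor
  · rintro ⟨h1, h2, h3⟩
    refine ⟨h1, ?_, by rw [h3]; ring⟩
    show absSum ν = _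
    rw [show absSum ν = (ν.map (fun x => |x|)).sum from rfl, h2]
    push_cast
    ring
  · rintro ⟨h1, h2, h3⟩
    refine ⟨h1, ?_, by rw [h3]; ring⟩
    rw [show (ν.map (fun x => |x|)).sum = absSum ν from rfl, h2]
    push_cast
    ring

lemma coeff_G0_even (M : ℕ) (hM : M ≠ 0) :
    (coeff (2*M)) G0 = ((fAc M M : ℤ) : ℚ) := by
  rw [G0, coeff_mk, if_neg (by omega)]
  rw [Aset_even M]
  have := (count_main (M + M) M M rfl).2.1
  rw [← this]
  norm_cast

lemma coeff_G0_odd (n : ℕ) (h : ¬ 2 ∣ n) : (coeff n) G0 = 0 := by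
  rw [G0, coeff_mk, if_neg (by omega), Aset_odd n h]
  simp

/-- 2·G0 - 1 = (1 - X²)·R -/
lemma hH : 2 * G0 - 1 = (1 - X^2) * Rser := by
  ext n
  rw [map_sub, two_mul, map_add, sub_mul, one_mul, map_sub, coeff_X_pow_mul']
  rcases Nat.even_or_odd n with ⟨M, hn⟩ | ⟨M, hn⟩
  · subst hn
    rw [show M + M = 2*M from by ring]
    rcases Nat.eq_zero_or_pos M with rfl | hM
    · have hg : (coeff 0) G0 = 1 := by rw [G0, coeff_mk]; norm_num
      rw [show (2*0 : ℕ) = 0 from rfl] at *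
      rw [hg, PowerSeries.coeff_one, if_pos rfl, if_neg (by omega),
        show (0:ℕ) = 2*0 from rfl, Rser_even, rQ_zero]
      norm_num
    · rw [coeff_G0_even M (by omega), if_pos (by omega),
        show 2*M - 2 = 2*(M-1) from by omega, Rser_even, Rser_even,
        PowerSeries.coeff_one, if_neg (by omega)]
      obtain ⟨M', rfl⟩ : ∃ M', M = M' + 1 := ⟨M - 1, by omega⟩
      have h2 := two_fAc_diag_q M'
      rw [show M' + 1 - 1 = M' from by omega]
      linarith
  · subst hn
    rw [coeff_G0_odd (2*M+1) (by omega), PowerSeries.coeff_one, if_neg (by omega),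
      Rser_odd]
    rcases Nat.eq_zero_or_pos M with rfl | hM
    · norm_num
    · rw [if_pos (by omega), show 2*M+1-2 = 2*(M-1)+1 from by omega, Rser_odd]
      ring

/-- the ODE satisfied by Rser -/
lemma coeff_dR (k : ℕ) : (coeff k) (d⁄dX ℚ Rser) = ((k:ℚ)+1) * (coeff (k+1)) Rser := by
  rw [PowerSeries.coeff_derivative]
  push_cast
  ring

lemma coeff_dR_even (M : ℕ) : (coeff (2*M)) (d⁄dX ℚ Rser) = 0 := by
  rw [coeff_dR, Rser_odd]
  ring

lemma coeff_dR_odd (M : ℕ) : (coeff (2*M+1)) (d⁄dX ℚ Rser) = (2*(M:ℚ)+2) * rQ (M+1) := by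
  rw [coeff_dR, show 2*M+1+1 = 2*(M+1) from by omega, Rser_even]
  push_cast
  ring

lemma hODE : (1 - 10*X^2 + 9*X^4 : ℚ⟦X⟧) * (d⁄dX ℚ Rser) = (10*X - 18*X^3) * Rser := by
  have hc10 : ((10 : ℚ⟦X⟧)) = C 10 := (map_ofNat _ 10).symm
  have hc9 : ((9 : ℚ⟦X⟧)) = C 9 := (map_ofNat _ 9).symm
  have hc18 : ((18 : ℚ⟦X⟧)) = C 18 := (map_ofNat _ 18).symm
  ext n
  have hL : (coeff n) ((1 - 10*X^2 + 9*X^4) * (d⁄dX ℚ Rser))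
      = (coeff n) (d⁄dX ℚ Rser)
        - 10 * (if 2 ≤ n then (coeff (n-2)) (d⁄dX ℚ Rser) else 0)
        + 9 * (if 4 ≤ n then (coeff (n-4)) (d⁄dX ℚ Rser) else 0) := by
    rw [add_mul, sub_mul, one_mul, map_add, map_sub, hc10, hc9,
      show C 10 * X^2 * (d⁄dX ℚ Rser) = C 10 * (X^2 * (d⁄dX ℚ Rser)) from
        mul_assoc _ _ _,
      show C 9 * X^4 * (d⁄dX ℚ Rser) = C 9 * (X^4 * (d⁄dX ℚ Rser)) from
        mul_assoc _ _ _,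
      coeff_C_mul, coeff_C_mul, coeff_X_pow_mul', coeff_X_pow_mul']
  have hR : (coeff n) ((10*X - 18*X^3) * Rser)
      = 10 * (if 1 ≤ n then (coeff (n-1)) Rser else 0)
        - 18 * (if 3 ≤ n then (coeff (n-3)) Rser else 0) := by
    rw [sub_mul, map_sub, hc10, hc18,
      show C 10 * X * Rser = C 10 * (X^1 * Rser) from by ring,
      show C 18 * X^3 * Rser = C 18 * (X^3 * Rser) from mul_assoc _ _ _,
      coeff_C_mul, coeff_C_mul, coeff_X_pow_mul', coeff_X_pow_mul']
  rw [hL, hR]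
  rcases Nat.even_or_odd n with ⟨M, hn⟩ | ⟨M, hn⟩
  · -- n = 2M : everything vanishes
    subst hn
    rw [show M + M = 2*M from by ring]
    match M with
    | 0 =>
      have h00 : (coeff 0) (d⁄dX ℚ Rser) = 0 := by
        have h := coeff_dR_even 0
        rwa [show (2*0:ℕ) = 0 from rfl] at h
      rw [show (2*0 : ℕ) = 0 from rfl, h00]
      norm_num
    | 1 =>
      rw [if_pos (by omega), if_neg (by omega), if_pos (by omega), if_neg (by omega)]
      rw [coeff_dR_even, show (2*1-2 : ℕ) = 2*0 from rfl,
        coeff_dR_even, show (2*1-1 : ℕ) = 2*0+1 from rfl, Rser_odd]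
      ring
    | (M+2) =>
      rw [if_pos (by omega), if_pos (by omega), if_pos (by omega), if_pos (by omega)]
      rw [coeff_dR_even, show 2*(M+2)-2 = 2*(M+1) from by omega, coeff_dR_even,
        show 2*(M+2)-4 = 2*M from by omega, coeff_dR_even,
        show 2*(M+2)-1 = 2*(M+1)+1 from by omega, Rser_odd,
        show 2*(M+2)-3 = 2*M+1 from by omega, Rser_odd]
      ring
  · -- n = 2M+1
    subst hn
    match M with
    | 0 =>
      rw [if_neg (by omega), if_neg (by omega), if_pos (by omega), if_neg (by omega)]
      rw [coeff_dR_odd, show (2*0+1-1 : ℕ) = 2*0 from rfl, Rser_even, rQ_zero, rQ_one]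
      norm_num
    | 1 =>
      rw [if_pos (by omega), if_neg (by omega), if_pos (by omega), if_pos (by omega)]
      rw [coeff_dR_odd, show (2*1+1-2 : ℕ) = 2*0+1 from rfl,
        coeff_dR_odd, show (2*1+1-1 : ℕ) = 2*1 from rfl, Rser_even,
        show (2*1+1-3 : ℕ) = 2*0 from rfl, Rser_even]
      have h0 := RRQ 0
      push_cast at h0 ⊢
      linarith
    | (M+2) =>
      rw [if_pos (by omega), if_pos (by omega), if_pos (by omega), if_pos (by omega)]
      rw [coeff_dR_odd, show 2*(M+2)+1-2 = 2*(M+1)+1 from by omega, coeff_dR_odd,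
        show 2*(M+2)+1-4 = 2*M+1 from by omega, coeff_dR_odd,
        show 2*(M+2)+1-1 = 2*(M+2) from by omega, Rser_even,
        show 2*(M+2)+1-3 = 2*(M+1) from by omega, Rser_even]
      have hr := RRQ (M+1)
      have hne : (2*((M:ℚ)+2)) ≠ 0 := by positivity
      refine mul_left_cancel₀ hne ?_
      push_cast at hr ⊢
      linear_combination hr

/-- main algebraic identity for Rser -/
lemma hQfinal : Rser^2 * ((1 - X^2) * (1 - 9*X^2)) = (1 : ℚ⟦X⟧) := by
  have hdel : ((1 : ℚ⟦X⟧) - X^2) * (1 - 9*X^2) = 1 - 10*X^2 + 9*X^4 := by ring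
  rw [hdel]
  have dX2 : d⁄dX ℚ (X^2 : ℚ⟦X⟧) = 2*X := by
    rw [pow_two, Derivation.leibniz, PowerSeries.derivative_X]
    simp only [smul_eq_mul]
    ring
  have dX4 : d⁄dX ℚ (X^4 : ℚ⟦X⟧) = 4*X^3 := by
    rw [show (X^4 : ℚ⟦X⟧) = X^2*X^2 from by ring, Derivation.leibniz, dX2]
    simp only [smul_eq_mul]
    ring
  have dC10 : d⁄dX ℚ (10 : ℚ⟦X⟧) = 0 := by
    rw [show (10:ℚ⟦X⟧) = C 10 from (map_ofNat _ 10).symm, PowerSeries.derivative_C]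
  have dC9 : d⁄dX ℚ (9 : ℚ⟦X⟧) = 0 := by
    rw [show (9:ℚ⟦X⟧) = C 9 from (map_ofNat _ 9).symm, PowerSeries.derivative_C]
  have dDel : d⁄dX ℚ (1 - 10*X^2 + 9*X^4 : ℚ⟦X⟧) = -20*X + 36*X^3 := by
    rw [map_add, map_sub, Derivation.map_one_eq_zero, Derivation.leibniz,
      Derivation.leibniz, dX2, dX4, dC10, dC9]
    simp only [smul_eq_mul]
    ring
  have dRsq : d⁄dX ℚ (Rser^2) = 2 * Rser * (d⁄dX ℚ Rser) := by
    rw [pow_two, Derivation.leibniz]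
    simp only [smul_eq_mul]
    ring
  have dQ : d⁄dX ℚ (Rser^2 * (1 - 10*X^2 + 9*X^4)) = 0 := by
    rw [Derivation.leibniz, dDel, dRsq]
    simp only [smul_eq_mul]
    linear_combination (2*Rser) * hODE
  have hconst : constantCoeff (Rser^2 * (1 - 10*X^2 + 9*X^4)) = constantCoeff 1 := by
    rw [map_mul, map_pow]
    have h1 : constantCoeff Rser = 1 := by
      have := Rser_even 0
      rw [show (2*0:ℕ) = 0 from rfl] at this
      rw [← PowerSeries.coeff_zero_eq_constantCoeff, this, rQ_zero]
    rw [h1]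
    simp
  exact PowerSeries.derivative.ext (by rw [dQ, Derivation.map_one_eq_zero]) hconst

end G0aux

/-- final theorem -/
theorem G0_generating_function :
    (2 * G0 - 1) ^ 2 * (1 - 9 * PowerSeries.X ^ 2) = 1 - PowerSeries.X ^ 2 := by
  rw [G0aux.hH]
  linear_combination ((1:ℚ⟦X⟧) - X^2) * G0aux.hQfinal
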